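/- Let a, b be complex sequences of length N, let (c,d) be the standard Golay complementary mate of (a,b) (c_k = conj(b_{N−1−k}), d_k = −conj(a_{N−1−k})), let x1,x2,x3,x4 ∈ {+1,−1} with x1·x2 + x3·x4 = 0, and define p = x1·a ∥ x2·b ∥ x3·a ∥ x4·b and q = x1·c ∥ x2·d ∥ x3·c ∥ x4·d of length 4N. Then for every shift τ with N ≤ τ ≤ 2N−1, C_p(τ) + C_q(τ) = 0. -/

import Mathlib

open Finset

/-- Aperiodic cross-correlation of length-`L` complex sequences at shift `0 ≤ τ`. -/
noncomputable def aCorr (a b : ℕ → ℂ) (L τ : ℕ) : ℂ :=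
  ∑ k ∈ Finset.range (L - τ), a k * (starRingEnd ℂ) (b (k + τ))

/-- Periodic cross-correlation of length-`L` complex sequences at shift `τ`. -/
noncomputable def pCorr (a b : ℕ → ℂ) (L τ : ℕ) : ℂ :=
  ∑ k ∈ Finset.range L, a k * (starRingEnd ℂ) (b ((k + τ) % L))

/-- The length-`4N` sequence `x1·a ∥ x2·b ∥ x3·a ∥ x4·b`. -/
noncomputable def quadConcat (N : ℕ) (x1 x2 x3 x4 : ℂ) (a b : ℕ → ℂ) : ℕ → ℂ :=
  fun n =>
    if n < N then x1 * a n
    else if n < 2 * N then x2 * b (n - N)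
    else if n < 3 * N then x3 * a (n - 2 * N)
    else x4 * b (n - 3 * N)

noncomputable def S1c (N t : ℕ) (a b : ℕ → ℂ) : ℂ :=
  ∑ k ∈ Finset.range (N - t), a k * (starRingEnd ℂ) (b (k + t))

noncomputable def S3c (N t : ℕ) (a : ℕ → ℂ) : ℂ :=
  ∑ k ∈ Finset.range t, a (k + (N - t)) * (starRingEnd ℂ) (a k)

lemma sum_range_split (m n : ℕ) (f : ℕ → ℂ) :
    ∑ k ∈ range (m + n), f k = ∑ k ∈ range m, f k + ∑ k ∈ range n, f (m + k) := by
  induction n with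
  | zero => simp
  | succ n ih => rw [Nat.add_succ, sum_range_succ, sum_range_succ, ih, add_assoc]

lemma quad_corr (N t : ℕ) (ht : t < N) (x1 x2 x3 x4 : ℂ) (a b : ℕ → ℂ) :
    aCorr (quadConcat N x1 x2 x3 x4 a b) (quadConcat N x1 x2 x3 x4 a b) (4 * N) (N + t)
      = x1 * (starRingEnd ℂ) x2 * S1c N t a b + x1 * (starRingEnd ℂ) x3 * S3c N t a
        + x2 * (starRingEnd ℂ) x3 * S1c N t b a + x2 * (starRingEnd ℂ) x4 * S3c N t b
        + x3 * (starRingEnd ℂ) x4 * S1c N t a b := by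
  unfold aCorr
  have hL : 4 * N - (N + t) = (N - t) + (t + ((N - t) + (t + (N - t)))) := by omega
  rw [hL, sum_range_split, sum_range_split, sum_range_split, sum_range_split]
  have hA : ∀ k ∈ range (N - t),
      quadConcat N x1 x2 x3 x4 a b k *
        (starRingEnd ℂ) (quadConcat N x1 x2 x3 x4 a b (k + (N + t)))
      = x1 * (starRingEnd ℂ) x2 * (a k * (starRingEnd ℂ) (b (k + t))) := by
    intro k hk
    simp only [mem_range] at hk
    simp only [quadConcat]
    rw [if_pos (show k < N by omega), if_neg (show ¬ (k + (N + t) < N) by omega),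
      if_pos (show k + (N + t) < 2 * N by omega),
      show k + (N + t) - N = k + t by omega, map_mul]
    ring
  have hB : ∀ k ∈ range t,
      quadConcat N x1 x2 x3 x4 a b ((N - t) + k) *
        (starRingEnd ℂ) (quadConcat N x1 x2 x3 x4 a b ((N - t) + k + (N + t)))
      = x1 * (starRingEnd ℂ) x3 * (a (k + (N - t)) * (starRingEnd ℂ) (a k)) := by
    intro k hk
    simp only [mem_range] at hk
    simp only [quadConcat]
    rw [if_pos (show (N - t) + k < N by omega),
      if_neg (show ¬ ((N - t) + k + (N + t) < N) by omega),
      if_neg (show ¬ ((N - t) + k + (N + t) < 2 * N) by omega),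
      if_pos (show (N - t) + k + (N + t) < 3 * N by omega),
      show (N - t) + k + (N + t) - 2 * N = k by omega,
      show (N - t) + k = k + (N - t) by omega, map_mul]
    ring
  have hC : ∀ k ∈ range (N - t),
      quadConcat N x1 x2 x3 x4 a b ((N - t) + (t + k)) *
        (starRingEnd ℂ) (quadConcat N x1 x2 x3 x4 a b ((N - t) + (t + k) + (N + t)))
      = x2 * (starRingEnd ℂ) x3 * (b k * (starRingEnd ℂ) (a (k + t))) := by
    intro k hk
    simp only [mem_range] at hk
    simp only [quadConcat]
    rw [if_neg (show ¬ ((N - t) + (t + k) < N) by omega),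
      if_pos (show (N - t) + (t + k) < 2 * N by omega),
      if_neg (show ¬ ((N - t) + (t + k) + (N + t) < N) by omega),
      if_neg (show ¬ ((N - t) + (t + k) + (N + t) < 2 * N) by omega),
      if_pos (show (N - t) + (t + k) + (N + t) < 3 * N by omega),
      show (N - t) + (t + k) - N = k by omega,
      show (N - t) + (t + k) + (N + t) - 2 * N = k + t by omega, map_mul]
    ring
  have hD : ∀ k ∈ range t,
      quadConcat N x1 x2 x3 x4 a b ((N - t) + (t + ((N - t) + k))) *
        (starRingEnd ℂ) (quadConcat N x1 x2 x3 x4 a b ((N - t) + (t + ((N - t) + k)) + (N + t)))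
      = x2 * (starRingEnd ℂ) x4 * (b (k + (N - t)) * (starRingEnd ℂ) (b k)) := by
    intro k hk
    simp only [mem_range] at hk
    simp only [quadConcat]
    rw [if_neg (show ¬ ((N - t) + (t + ((N - t) + k)) < N) by omega),
      if_pos (show (N - t) + (t + ((N - t) + k)) < 2 * N by omega),
      if_neg (show ¬ ((N - t) + (t + ((N - t) + k)) + (N + t) < N) by omega),
      if_neg (show ¬ ((N - t) + (t + ((N - t) + k)) + (N + t) < 2 * N) by omega),
      if_neg (show ¬ ((N - t) + (t + ((N - t) + k)) + (N + t) < 3 * N) by omega),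
      show (N - t) + (t + ((N - t) + k)) - N = k + (N - t) by omega,
      show (N - t) + (t + ((N - t) + k)) + (N + t) - 3 * N = k by omega, map_mul]
    ring
  have hE : ∀ k ∈ range (N - t),
      quadConcat N x1 x2 x3 x4 a b ((N - t) + (t + ((N - t) + (t + k)))) *
        (starRingEnd ℂ)
          (quadConcat N x1 x2 x3 x4 a b ((N - t) + (t + ((N - t) + (t + k))) + (N + t)))
      = x3 * (starRingEnd ℂ) x4 * (a k * (starRingEnd ℂ) (b (k + t))) := by
    intro k hk
    simp only [mem_range] at hk
    simp only [quadConcat]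
    rw [if_neg (show ¬ ((N - t) + (t + ((N - t) + (t + k))) < N) by omega),
      if_neg (show ¬ ((N - t) + (t + ((N - t) + (t + k))) < 2 * N) by omega),
      if_pos (show (N - t) + (t + ((N - t) + (t + k))) < 3 * N by omega),
      if_neg (show ¬ ((N - t) + (t + ((N - t) + (t + k))) + (N + t) < N) by omega),
      if_neg (show ¬ ((N - t) + (t + ((N - t) + (t + k))) + (N + t) < 2 * N) by omega),
      if_neg (show ¬ ((N - t) + (t + ((N - t) + (t + k))) + (N + t) < 3 * N) by omega),
      show (N - t) + (t + ((N - t) + (t + k))) - 2 * N = k by omega,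
      show (N - t) + (t + ((N - t) + (t + k))) + (N + t) - 3 * N = k + t by omega, map_mul]
    ring
  rw [Finset.sum_congr rfl hA, Finset.sum_congr rfl hB, Finset.sum_congr rfl hC,
    Finset.sum_congr rfl hD, Finset.sum_congr rfl hE]
  simp only [S1c, S3c, ← Finset.mul_sum]
  ring

theorem statement4 (N : ℕ) (a b c d : ℕ → ℂ) (x1 x2 x3 x4 : ℂ)
    (hx1 : x1 = 1 ∨ x1 = -1) (hx2 : x2 = 1 ∨ x2 = -1)
    (hx3 : x3 = 1 ∨ x3 = -1) (hx4 : x4 = 1 ∨ x4 = -1)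
    (hsum : x1 * x2 + x3 * x4 = 0)
    (hc : ∀ k, c k = (starRingEnd ℂ) (b (N - 1 - k)))
    (hd : ∀ k, d k = -(starRingEnd ℂ) (a (N - 1 - k)))
    (p q : ℕ → ℂ)
    (hp : p = quadConcat N x1 x2 x3 x4 a b)
    (hq : q = quadConcat N x1 x2 x3 x4 c d) :
    ∀ τ, N ≤ τ → τ ≤ 2 * N - 1 →
      aCorr p p (4 * N) τ + aCorr q q (4 * N) τ = 0 := by
  intro τ hτ1 hτ2
  rcases Nat.eq_zero_or_pos N with h0 | hN
  · subst h0
    simp [aCorr]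
  · have ht : τ - N < N := by omega
    have hτ : τ = N + (τ - N) := by omega
    set t := τ - N with htdef
    rw [hτ, hp, hq, quad_corr N t ht x1 x2 x3 x4 a b, quad_corr N t ht x1 x2 x3 x4 c d]
    have h1 : S1c N t c d = - S1c N t a b := by
      unfold S1c
      rw [← Finset.sum_range_reflect (fun j => a j * (starRingEnd ℂ) (b (j + t))) (N - t),
        ← Finset.sum_neg_distrib]
      refine Finset.sum_congr rfl fun k hk => ?_
      simp only [mem_range] at hk
      simp only [hc, hd, map_neg, Complex.conj_conj]
      rw [show N - 1 - (k + t) = N - t - 1 - k by omega,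
        show N - 1 - k = (N - t - 1 - k) + t by omega]
      ring
    have h2 : S1c N t d c = - S1c N t b a := by
      unfold S1c
      rw [← Finset.sum_range_reflect (fun j => b j * (starRingEnd ℂ) (a (j + t))) (N - t),
        ← Finset.sum_neg_distrib]
      refine Finset.sum_congr rfl fun k hk => ?_
      simp only [mem_range] at hk
      simp only [hc, hd, map_neg, Complex.conj_conj]
      rw [show N - 1 - (k + t) = N - t - 1 - k by omega,
        show N - 1 - k = (N - t - 1 - k) + t by omega]
      ring
    have h3 : S3c N t c = S3c N t b := by
      unfold S3c
      rw [← Finset.sum_range_reflect (fun j => b (j + (N - t)) * (starRingEnd ℂ) (b j)) t]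
      refine Finset.sum_congr rfl fun k hk => ?_
      simp only [mem_range] at hk
      simp only [hc, Complex.conj_conj]
      rw [show N - 1 - (k + (N - t)) = t - 1 - k by omega,
        show N - 1 - k = (t - 1 - k) + (N - t) by omega]
      ring
    have h4 : S3c N t d = S3c N t a := by
      unfold S3c
      rw [← Finset.sum_range_reflect (fun j => a (j + (N - t)) * (starRingEnd ℂ) (a j)) t]
      refine Finset.sum_congr rfl fun k hk => ?_
      simp only [mem_range] at hk
      simp only [hd, map_neg, Complex.conj_conj]
      rw [show N - 1 - (k + (N - t)) = t - 1 - k by omega,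
        show N - 1 - k = (t - 1 - k) + (N - t) by omega]
      ring
    have hconj : ∀ x : ℂ, x = 1 ∨ x = -1 → (starRingEnd ℂ) x = x := by
      rintro x (rfl | rfl) <;> simp
    have hkey : x1 * x3 + x2 * x4 = 0 := by
      rcases hx1 with rfl | rfl <;> rcases hx2 with rfl | rfl <;>
        rcases hx3 with rfl | rfl <;> rcases hx4 with rfl | rfl <;> revert hsum <;> norm_num
    rw [h1, h2, h3, h4, hconj x2 hx2, hconj x3 hx3, hconj x4 hx4]
    linear_combination (S3c N t a + S3c N t b) * hkey
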